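/- Let $\xi$ be a real number and $n, p, q$ positive integers with $p, q \leq n$. There exists a constant $c > 0$ depending only on $\xi$ and $n$ such that for any integer polynomials $P, Q$ of degree $p$ and $q$ respectively, $|\mathrm{Res}(P,Q)| \leq c\, H(P)^{q-1} H(Q)^{p-1} \max\{H(P)|Q(\xi)|,\ H(Q)|P(\xi)|\}$. -/

import Mathlib

open Polynomial

/-- Naive height of an integer polynomial, as a real number. -/
noncomputable def heightZ (P : Polynomial ℤ) : ℝ := ⨆ i : ℕ, |(P.coeff i : ℝ)|

/-- The Sylvester matrix of two integer polynomials `P`, `Q` of respective degrees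
`p`, `q`: the first `q` columns contain the coefficients of `P` (shifted), the last
`p` columns those of `Q`. -/
def sylvester (P Q : Polynomial ℤ) (p q : ℕ) : Matrix (Fin (q + p)) (Fin (q + p)) ℤ :=
  fun i j =>
    if (j : ℕ) < q then
      (if (j : ℕ) ≤ (i : ℕ) ∧ (i : ℕ) ≤ (j : ℕ) + p then P.coeff (p - ((i : ℕ) - (j : ℕ)))
       else 0)
    else
      (if (j : ℕ) - q ≤ (i : ℕ) ∧ (i : ℕ) ≤ ((j : ℕ) - q) + q then
        Q.coeff (q - ((i : ℕ) - ((j : ℕ) - q)))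
       else 0)

/-- The resultant of `P` and `Q` (of degrees `p` and `q`), as the determinant of
their Sylvester matrix. -/
def res (P Q : Polynomial ℤ) (p q : ℕ) : ℤ := (_root_.sylvester P Q p q).det


lemma heightZ_bdd (P : Polynomial ℤ) : BddAbove (Set.range fun i : ℕ => |(P.coeff i : ℝ)|) := by
  refine ⟨(P.support.sup fun i => (P.coeff i).natAbs : ℕ), ?_⟩
  rintro x ⟨i, rfl⟩
  by_cases h : i ∈ P.support
  · have := Finset.le_sup (f := fun i => (P.coeff i).natAbs) h
    show |(P.coeff i : ℝ)| ≤ _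
    rw [← Int.cast_abs, Int.abs_eq_natAbs]
    exact_mod_cast this
  · simp [Polynomial.notMem_support_iff.1 h]

lemma coeff_le_heightZ (P : Polynomial ℤ) (i : ℕ) : |(P.coeff i : ℝ)| ≤ heightZ P :=
  le_ciSup (heightZ_bdd P) i

lemma heightZ_nonneg (P : Polynomial ℤ) : 0 ≤ heightZ P :=
  le_trans (abs_nonneg _) (coeff_le_heightZ P 0)

lemma one_le_heightZ {P : Polynomial ℤ} (h : P ≠ 0) : 1 ≤ heightZ P := by
  refine le_trans ?_ (coeff_le_heightZ P P.natDegree)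
  have : P.coeff P.natDegree ≠ 0 := Polynomial.leadingCoeff_ne_zero.2 h
  rw [← Int.cast_abs]
  exact_mod_cast Int.one_le_abs (by simpa using this)
open Polynomial Finset

lemma sum_shift (g : ℕ → ℝ) (a b N : ℕ) (hab : a + b < N) (t : ℝ) :
    ∑ i ∈ Finset.range N, (if a ≤ i ∧ i ≤ a + b then t ^ (N - 1 - i) * g (b - (i - a)) else 0)
      = t ^ (N - 1 - (a + b)) * ∑ k ∈ Finset.range (b + 1), g k * t ^ k := by
  have hsub : Finset.Icc a (a + b) ⊆ Finset.range N := by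
    intro x hx; rw [Finset.mem_Icc] at hx; rw [Finset.mem_range]; omega
  rw [← Finset.sum_subset hsub (by intro x _ hx; rw [Finset.mem_Icc] at hx; simp [hx])]
  rw [Finset.mul_sum]
  refine Finset.sum_nbij' (fun i => a + b - i) (fun k => a + b - k) ?_ ?_ ?_ ?_ ?_
  · intro x hx; rw [Finset.mem_Icc] at hx; rw [Finset.mem_range]; omega
  · intro x hx; rw [Finset.mem_range] at hx; rw [Finset.mem_Icc]; omega
  · intro x hx; rw [Finset.mem_Icc] at hx; omega
  · intro x hx; rw [Finset.mem_range] at hx; omega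
  · intro i hi
    rw [Finset.mem_Icc] at hi
    have h1 : b - (i - a) = a + b - i := by omega
    have h2 : N - 1 - i = (N - 1 - (a + b)) + (a + b - i) := by omega
    rw [h1, h2, pow_add, if_pos hi]; ring

/-- Classical upper bound for the resultant of two integer polynomials: the constant
`c` depends only on `ξ` and `n`. -/
theorem resultant_bound (ξ : ℝ) (n : ℕ) (hn : 1 ≤ n) :
    ∃ c : ℝ, 0 < c ∧ ∀ p q : ℕ, 1 ≤ p → 1 ≤ q → p ≤ n → q ≤ n →
      ∀ P Q : Polynomial ℤ, P.natDegree = p → Q.natDegree = q →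
      |((res P Q p q : ℤ) : ℝ)| ≤
        c * heightZ P ^ (q - 1) * heightZ Q ^ (p - 1) *
          max (heightZ P * |Polynomial.aeval ξ Q|) (heightZ Q * |Polynomial.aeval ξ P|) := by
  classical
  set M : ℝ := max 1 |ξ| with hM
  have hM1 : (1:ℝ) ≤ M := le_max_left _ _
  have hMξ : |ξ| ≤ M := le_max_right _ _
  have hM0 : (0:ℝ) < M := lt_of_lt_of_le one_pos hM1
  refine ⟨((2*n).factorial : ℝ) * M ^ (2*n), by positivity, ?_⟩
  intro p q hp hq hpn hqn P Q hP hQ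
  have hP0 : P ≠ 0 := fun h => by rw [h] at hP; simp at hP; omega
  have hQ0 : Q ≠ 0 := fun h => by rw [h] at hQ; simp at hQ; omega
  set HP := heightZ P with hHP
  set HQ := heightZ Q with hHQ
  have hHP1 : (1:ℝ) ≤ HP := one_le_heightZ hP0
  have hHQ1 : (1:ℝ) ≤ HQ := one_le_heightZ hQ0
  have hHP0 : (0:ℝ) < HP := lt_of_lt_of_le one_pos hHP1
  have hHQ0 : (0:ℝ) < HQ := lt_of_lt_of_le one_pos hHQ1
  set A : Matrix (Fin (q+p)) (Fin (q+p)) ℝ := (_root_.sylvester P Q p q).map (fun z : ℤ => (z:ℝ)) with hA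
  have hresA : ((res P Q p q : ℤ) : ℝ) = A.det := by
    rw [res, hA]
    exact RingHom.map_det (Int.castRingHom ℝ) _
  set e : Fin (q+p) := ⟨q+p-1, by omega⟩ with he
  set cc : Fin (q+p) → ℝ := fun i => ξ ^ (q+p-1-(i:ℕ)) with hcc
  have hcce : cc e = 1 := by simp [hcc, he]
  set r : Fin (q+p) → ℝ := ∑ i, cc i • A i with hr
  set D := A.updateRow e r with hD
  have hdet : A.det = D.det := by
    rw [hD, hr, Matrix.det_updateRow_sum, hcce, one_smul]
  -- evaluation formulas for the new row
  have hPval : (Polynomial.aeval ξ P : ℝ) = ∑ k ∈ Finset.range (p+1), (P.coeff k : ℝ) * ξ ^ k := by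
    rw [Polynomial.aeval_eq_sum_range, hP]
    exact Finset.sum_congr rfl fun i _ => by rw [zsmul_eq_mul]
  have hQval : (Polynomial.aeval ξ Q : ℝ) = ∑ k ∈ Finset.range (q+1), (Q.coeff k : ℝ) * ξ ^ k := by
    rw [Polynomial.aeval_eq_sum_range, hQ]
    exact Finset.sum_congr rfl fun i _ => by rw [zsmul_eq_mul]
  have hrowP : ∀ j : Fin (q+p), (j:ℕ) < q →
      r j = ξ ^ (q-1-(j:ℕ)) * (Polynomial.aeval ξ P) := by
    intro j hj
    have h1 : r j = ∑ i ∈ Finset.range (q+p),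
        (if (j:ℕ) ≤ i ∧ i ≤ (j:ℕ)+p then ξ^(q+p-1-i) * ((P.coeff (p-(i-(j:ℕ))) : ℤ) : ℝ) else 0) := by
      rw [hr, Finset.sum_apply, ← Fin.sum_univ_eq_sum_range]
      refine Finset.sum_congr rfl fun i _ => ?_
      have hAij : A i j = if (j:ℕ) ≤ (i:ℕ) ∧ (i:ℕ) ≤ (j:ℕ)+p
          then ((P.coeff (p-((i:ℕ)-(j:ℕ))) : ℤ) : ℝ) else 0 := by
        simp only [hA, Matrix.map_apply, _root_.sylvester, if_pos hj,
          apply_ite (fun z : ℤ => (z:ℝ)), Int.cast_zero]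
      simp only [Pi.smul_apply, smul_eq_mul, hAij, hcc, mul_ite, mul_zero]
    rw [h1, sum_shift (fun k => ((P.coeff k : ℤ) : ℝ)) (j:ℕ) p (q+p) (by omega) ξ, ← hPval]
    congr 2
    omega
  have hrowQ : ∀ j : Fin (q+p), q ≤ (j:ℕ) →
      r j = ξ ^ (p-1-((j:ℕ)-q)) * (Polynomial.aeval ξ Q) := by
    intro j hj
    have h1 : r j = ∑ i ∈ Finset.range (q+p),
        (if (j:ℕ)-q ≤ i ∧ i ≤ ((j:ℕ)-q)+q then ξ^(q+p-1-i) * ((Q.coeff (q-(i-((j:ℕ)-q))) : ℤ) : ℝ) else 0) := by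
      rw [hr, Finset.sum_apply, ← Fin.sum_univ_eq_sum_range]
      refine Finset.sum_congr rfl fun i _ => ?_
      have hAij : A i j = if (j:ℕ)-q ≤ (i:ℕ) ∧ (i:ℕ) ≤ ((j:ℕ)-q)+q
          then ((Q.coeff (q-((i:ℕ)-((j:ℕ)-q))) : ℤ) : ℝ) else 0 := by
        simp only [hA, Matrix.map_apply, _root_.sylvester, if_neg (not_lt.2 hj),
          apply_ite (fun z : ℤ => (z:ℝ)), Int.cast_zero]
      simp only [Pi.smul_apply, smul_eq_mul, hAij, hcc, mul_ite, mul_zero]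
    rw [h1, sum_shift (fun k => ((Q.coeff k : ℤ) : ℝ)) ((j:ℕ)-q) q (q+p) (by omega) ξ, ← hQval]
    congr 2
    omega
  -- column bounds
  set B : Fin (q+p) → ℝ := fun j => if (j:ℕ) < q then HP else HQ with hB
  set E : Fin (q+p) → ℝ := fun j => if (j:ℕ) < q then |Polynomial.aeval ξ P| else |Polynomial.aeval ξ Q| with hE
  have hB0 : ∀ j, 0 < B j := by
    intro j; rw [hB]; dsimp only; split <;> assumption
  have hE0 : ∀ j, 0 ≤ E j := by
    intro j; rw [hE]; dsimp only; split <;> exact abs_nonneg _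
  have hAB : ∀ i j, |A i j| ≤ B j := by
    intro i j
    rw [hA, hB]
    simp only [Matrix.map_apply, _root_.sylvester]
    by_cases hj : (j:ℕ) < q
    · simp only [if_pos hj]
      split
      · exact coeff_le_heightZ P _
      · simpa using hHP0.le
    · simp only [if_neg hj]
      split
      · exact coeff_le_heightZ Q _
      · simpa using hHQ0.le
  have hrB : ∀ j, |r j| ≤ M^(2*n) * E j := by
    intro j
    have hpow : ∀ k : ℕ, k ≤ 2*n → |ξ|^k ≤ M^(2*n) := fun k hk =>
      le_trans (pow_le_pow_left₀ (abs_nonneg _) hMξ k) (pow_le_pow_right₀ hM1 hk)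
    by_cases hj : (j:ℕ) < q
    · rw [hrowP j hj, abs_mul, abs_pow, hE]
      dsimp only
      rw [if_pos hj]
      exact mul_le_mul_of_nonneg_right (hpow _ (by omega)) (abs_nonneg _)
    · rw [hrowQ j (not_lt.1 hj), abs_mul, abs_pow, hE]
      dsimp only
      rw [if_neg hj]
      exact mul_le_mul_of_nonneg_right (hpow _ (by omega)) (abs_nonneg _)
  -- product of column bounds
  have hBprod : ∏ j, B j = HP^q * HQ^p := by
    rw [hB, Fin.prod_univ_eq_prod_range (fun i => if i < q then HP else HQ) (q+p)]
    rw [Finset.range_eq_Ico, ← Finset.prod_Ico_consecutive _ (Nat.zero_le q) (by omega : q ≤ q+p)]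
    have h1 : ∏ i ∈ Finset.Ico 0 q, (if i < q then HP else HQ) = HP^q := by
      rw [Finset.prod_congr rfl (fun i hi => if_pos (Finset.mem_Ico.1 hi).2)]
      rw [Finset.prod_const, Nat.card_Ico, Nat.sub_zero]
    have h2 : ∏ i ∈ Finset.Ico q (q+p), (if i < q then HP else HQ) = HQ^p := by
      rw [Finset.prod_congr rfl (fun i hi => if_neg (not_lt.2 (Finset.mem_Ico.1 hi).1))]
      rw [Finset.prod_const, Nat.card_Ico, Nat.add_sub_cancel_left]
    rw [h1, h2]
  set RHS : ℝ := HP^(q-1) * HQ^(p-1) *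
      max (HP * |Polynomial.aeval ξ Q|) (HQ * |Polynomial.aeval ξ P|) with hRHS
  have hRHS0 : 0 ≤ RHS := by
    rw [hRHS]
    refine mul_nonneg (mul_nonneg (pow_nonneg hHP0.le _) (pow_nonneg hHQ0.le _)) ?_
    exact le_trans (mul_nonneg hHP0.le (abs_nonneg _)) (le_max_left _ _)
  have key : ∀ j0 : Fin (q+p), E j0 * ∏ i ∈ Finset.univ.erase j0, B i ≤ RHS := by
    intro j0
    have herase : B j0 * ∏ i ∈ Finset.univ.erase j0, B i = HP^q * HQ^p := by
      rw [Finset.mul_prod_erase _ _ (Finset.mem_univ j0), hBprod]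
    rw [← mul_le_mul_iff_right₀ (hB0 j0),
      show B j0 * (E j0 * ∏ i ∈ Finset.univ.erase j0, B i)
        = E j0 * (B j0 * ∏ i ∈ Finset.univ.erase j0, B i) from by ring, herase]
    have hq' : HP^q = HP^(q-1) * HP := by
      rw [← pow_succ]; congr 1; omega
    have hp' : HQ^p = HQ^(p-1) * HQ := by
      rw [← pow_succ]; congr 1; omega
    by_cases hj : (j0:ℕ) < q
    · have hEj : E j0 = |Polynomial.aeval ξ P| := by rw [hE]; exact if_pos hj
      have hBj : B j0 = HP := by rw [hB]; exact if_pos hj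
      rw [hEj, hBj, hq', hp', hRHS]
      have h1 : HQ * |Polynomial.aeval ξ P| ≤
          max (HP * |Polynomial.aeval ξ Q|) (HQ * |Polynomial.aeval ξ P|) := le_max_right _ _
      calc |Polynomial.aeval ξ P| * (HP^(q-1) * HP * (HQ^(p-1) * HQ))
          = HP * (HP^(q-1) * HQ^(p-1) * (HQ * |Polynomial.aeval ξ P|)) := by ring
        _ ≤ HP * (HP^(q-1) * HQ^(p-1) *
            max (HP * |Polynomial.aeval ξ Q|) (HQ * |Polynomial.aeval ξ P|)) := by
            refine mul_le_mul_of_nonneg_left ?_ hHP0.le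
            exact mul_le_mul_of_nonneg_left h1
              (mul_nonneg (pow_nonneg hHP0.le _) (pow_nonneg hHQ0.le _))
    · have hEj : E j0 = |Polynomial.aeval ξ Q| := by rw [hE]; exact if_neg hj
      have hBj : B j0 = HQ := by rw [hB]; exact if_neg hj
      rw [hEj, hBj, hq', hp', hRHS]
      have h1 : HP * |Polynomial.aeval ξ Q| ≤
          max (HP * |Polynomial.aeval ξ Q|) (HQ * |Polynomial.aeval ξ P|) := le_max_left _ _
      calc |Polynomial.aeval ξ Q| * (HP^(q-1) * HP * (HQ^(p-1) * HQ))
          = HQ * (HP^(q-1) * HQ^(p-1) * (HP * |Polynomial.aeval ξ Q|)) := by ring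
        _ ≤ HQ * (HP^(q-1) * HQ^(p-1) *
            max (HP * |Polynomial.aeval ξ Q|) (HQ * |Polynomial.aeval ξ P|)) := by
            refine mul_le_mul_of_nonneg_left ?_ hHQ0.le
            exact mul_le_mul_of_nonneg_left h1
              (mul_nonneg (pow_nonneg hHP0.le _) (pow_nonneg hHQ0.le _))
  -- per-permutation bound
  have hperm : ∀ σ : Equiv.Perm (Fin (q+p)), ∏ i, |D (σ i) i| ≤ M^(2*n) * RHS := by
    intro σ
    set j0 : Fin (q+p) := σ.symm e with hj0
    have hσj0 : σ j0 = e := σ.apply_symm_apply e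
    rw [← Finset.mul_prod_erase _ _ (Finset.mem_univ j0)]
    have h1 : |D (σ j0) j0| ≤ M^(2*n) * E j0 := by
      rw [hσj0, hD, Matrix.updateRow_self]
      exact hrB j0
    have h2 : ∏ i ∈ Finset.univ.erase j0, |D (σ i) i| ≤ ∏ i ∈ Finset.univ.erase j0, B i := by
      refine Finset.prod_le_prod (fun i _ => abs_nonneg _) (fun i hi => ?_)
      have hne : σ i ≠ e := by
        intro h
        exact (Finset.ne_of_mem_erase hi) (by
          have := σ.injective (h.trans hσj0.symm)
          exact this)
      rw [hD, Matrix.updateRow_ne hne]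
      exact hAB (σ i) i
    calc |D (σ j0) j0| * ∏ i ∈ Finset.univ.erase j0, |D (σ i) i|
        ≤ (M^(2*n) * E j0) * ∏ i ∈ Finset.univ.erase j0, B i := by
          refine mul_le_mul h1 h2 (Finset.prod_nonneg fun i _ => abs_nonneg _) ?_
          exact mul_nonneg (pow_nonneg hM0.le _) (hE0 j0)
      _ = M^(2*n) * (E j0 * ∏ i ∈ Finset.univ.erase j0, B i) := by ring
      _ ≤ M^(2*n) * RHS := mul_le_mul_of_nonneg_left (key j0) (pow_nonneg hM0.le _)
  -- sum over permutations
  have hdetD : |D.det| ≤ ((q+p).factorial : ℝ) * (M^(2*n) * RHS) := by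
    rw [Matrix.det_apply]
    refine le_trans (Finset.abs_sum_le_sum_abs _ _) ?_
    have hterm : ∀ σ : Equiv.Perm (Fin (q+p)),
        |Equiv.Perm.sign σ • ∏ i, D (σ i) i| ≤ M^(2*n) * RHS := by
      intro σ
      have habs : |Equiv.Perm.sign σ • ∏ i, D (σ i) i| = |∏ i, D (σ i) i| := by
        rcases Int.units_eq_one_or (Equiv.Perm.sign σ) with h | h <;> simp [h]
      rw [habs, Finset.abs_prod]
      exact hperm σ
    refine le_trans (Finset.sum_le_card_nsmul _ _ _ (fun σ _ => hterm σ)) ?_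
    rw [Finset.card_univ, Fintype.card_perm, Fintype.card_fin, nsmul_eq_mul]
  -- conclude
  rw [hresA, hdet]
  refine le_trans hdetD ?_
  have hfact : ((q+p).factorial : ℝ) ≤ ((2*n).factorial : ℝ) := by
    exact_mod_cast Nat.factorial_le (by omega)
  calc ((q+p).factorial : ℝ) * (M^(2*n) * RHS)
      ≤ ((2*n).factorial : ℝ) * (M^(2*n) * RHS) := by
        refine mul_le_mul_of_nonneg_right hfact ?_
        exact mul_nonneg (pow_nonneg hM0.le _) hRHS0
    _ = ((2*n).factorial : ℝ) * M^(2*n) * HP^(q-1) * HQ^(p-1) *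
        max (HP * |Polynomial.aeval ξ Q|) (HQ * |Polynomial.aeval ξ P|) := by
        rw [hRHS]; ring
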